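/- Let k be a field of characteristic 2 with the involution ι on S = k[x_1,y_1,…,x_g,y_g] given by x_i ↦ x_i, y_i ↦ y_i + x_i. For every subset D ⊆ {1,…,g}, the relation ∑_{L ⊊ D} (∏_{i ∈ D∖L} x_i) · Tr(∏_{j∈L} y_j) = 0 holds in S, where the sum is over all proper subsets L of D. -/
import Mathlib


open MvPolynomial

/-- Campbell–Wehlau relation (i): Over a field `k` of
characteristic 2, with `ι` on `k[x₁,y₁,…,x_g,y_g]` given by `xᵢ ↦ xᵢ`,
`yᵢ ↦ yᵢ + xᵢ` and `Tr(f) = f + ι(f)`: for every `D ⊆ {1,…,g}`,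
`∑_{L ⊊ D} (∏_{i∈D∖L} xᵢ) · Tr(∏_{j∈L} yⱼ) = 0`.
Variables: `X (i, false) = xᵢ`, `X (i, true) = yᵢ`. -/
theorem stmt16 (k : Type*) [Field k] [CharP k 2] (g : ℕ)
    (ι : MvPolynomial (Fin g × Bool) k →ₐ[k] MvPolynomial (Fin g × Bool) k)
    (hι : ι = aeval (fun v : Fin g × Bool =>
      if v.2 then X v + X (v.1, false) else X v))
    (Tr : MvPolynomial (Fin g × Bool) k → MvPolynomial (Fin g × Bool) k)
    (hTr : ∀ f, Tr f = f + ι f)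
    (D : Finset (Fin g)) :
    ∑ L ∈ D.powerset.filter (· ≠ D),
      (∏ i ∈ D \ L, X (i, false)) * Tr (∏ j ∈ L, X (j, true)) = 0 := by
  have hιy : ∀ L : Finset (Fin g),
      ι (∏ j ∈ L, X (j, true)) = ∏ j ∈ L, (X ((j, true) : Fin g × Bool) + X (j, false)) := by
    intro L
    subst hι
    rw [map_prod]
    refine Finset.prod_congr rfl fun j _ => ?_
    simp [aeval_X]
  -- Sum over the whole powerset equals the term at `L = D`.
  have key : ∑ L ∈ D.powerset,
      (∏ i ∈ D \ L, X (i, false)) * Tr (∏ j ∈ L, X (j, true))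
        = Tr (∏ j ∈ D, X ((j, true) : Fin g × Bool)) := by
    simp only [hTr, hιy, mul_add]
    rw [Finset.sum_add_distrib]
    have h1 : ∑ L ∈ D.powerset,
        (∏ i ∈ D \ L, X ((i, false) : Fin g × Bool)) *
          ∏ j ∈ L, (X ((j, true) : Fin g × Bool) : MvPolynomial (Fin g × Bool) k)
          = ∏ j ∈ D, (X ((j, true) : Fin g × Bool) + X (j, false)) := by
      rw [Finset.prod_add (fun j : Fin g => (X ((j, true) : Fin g × Bool) : MvPolynomial (Fin g × Bool) k))
        (fun j : Fin g => X ((j, false) : Fin g × Bool)) D]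
      exact Finset.sum_congr rfl fun L hL => mul_comm _ _
    have h2 : ∑ L ∈ D.powerset,
        (∏ i ∈ D \ L, X ((i, false) : Fin g × Bool))
          * ∏ j ∈ L, ((X ((j, true) : Fin g × Bool) : MvPolynomial (Fin g × Bool) k)
            + X (j, false))
          = ∏ j ∈ D, X ((j, true) : Fin g × Bool) := by
      have := Finset.prod_add
        (fun j : Fin g => (X ((j, true) : Fin g × Bool) : MvPolynomial (Fin g × Bool) k)
          + X (j, false))
        (fun j : Fin g => X ((j, false) : Fin g × Bool)) D
      rw [show ∏ j ∈ D, (X ((j, true) : Fin g × Bool) + X (j, false) + X (j, false))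
            = ∏ j ∈ D, X ((j, true) : Fin g × Bool) from
          Finset.prod_congr rfl fun j _ => by
            rw [add_assoc, CharTwo.add_self_eq_zero, add_zero]] at this
      rw [this]
      exact Finset.sum_congr rfl fun L hL => mul_comm _ _
    rw [h1, h2, add_comm]
  have hD : Finset.filter (· ≠ D) D.powerset = D.powerset.erase D :=
    Finset.filter_ne' _ _
  have hmem : D ∈ D.powerset := Finset.mem_powerset_self D
  have := Finset.add_sum_erase D.powerset
    (fun L => (∏ i ∈ D \ L, X ((i, false) : Fin g × Bool)) * Tr (∏ j ∈ L, X (j, true))) hmem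
  rw [key] at this
  rw [hD]
  have hterm : (∏ i ∈ D \ D, X ((i, false) : Fin g × Bool))
      * Tr (∏ j ∈ D, X (j, true)) = Tr (∏ j ∈ D, X ((j, true) : Fin g × Bool)) := by
    simp
  simp only [hterm] at this
  have this' : Tr (∏ j ∈ D, X ((j, true) : Fin g × Bool)) +
      ∑ L ∈ D.powerset.erase D,
        (∏ i ∈ D \ L, X ((i, false) : Fin g × Bool)) * Tr (∏ j ∈ L, X (j, true))
      = Tr (∏ j ∈ D, X ((j, true) : Fin g × Bool)) + 0 := by
    rw [add_zero]; exact this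
  exact add_left_cancel this'
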